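/- Let 0 ≤ β < 1, let v ∈ ℝ^k be a unit vector, and let g ∈ ℝ^k be nonzero. Set y = ‖g‖₂, u = −g/y, w = ‖(1+β)u − βv‖₂, and v̂ = ((1+β)u − βv)/w. Then 2⟨g, v − v̂⟩ = (y(w − β)/(1+β)) · ‖v − v̂‖₂², and consequently 2⟨g, v − v̂⟩ ≥ (y(1 − β)/(1+β)) · ‖v − v̂‖₂² ≥ 0. -/

import Mathlib

open scoped RealInnerProductSpace

theorem single_update_objective_identity {k : ℕ} (β : ℝ) (hβ0 : 0 ≤ β) (hβ1 : β < 1)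
    (v g : EuclideanSpace ℝ (Fin k)) (hv : ‖v‖ = 1) (hg : g ≠ 0)
    (y w : ℝ) (u vh : EuclideanSpace ℝ (Fin k))
    (hy : y = ‖g‖) (hu : u = -(y⁻¹ • g))
    (hw : w = ‖(1 + β) • u - β • v‖)
    (hvh : vh = w⁻¹ • ((1 + β) • u - β • v)) :
    2 * ⟪g, v - vh⟫ = y * (w - β) / (1 + β) * ‖v - vh‖ ^ 2 ∧
    2 * ⟪g, v - vh⟫ ≥ y * (1 - β) / (1 + β) * ‖v - vh‖ ^ 2 ∧
    y * (1 - β) / (1 + β) * ‖v - vh‖ ^ 2 ≥ 0 := by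
  have hy0 : 0 < y := hy ▸ norm_pos_iff.mpr hg
  have hu1 : ‖u‖ = 1 := by
    rw [hu, norm_neg, norm_smul, Real.norm_eq_abs, abs_inv, abs_of_pos hy0, ← hy]
    field_simp
  have hg' : g = -(y • u) := by
    rw [hu, smul_neg, smul_smul, mul_inv_cancel₀ hy0.ne', one_smul, neg_neg]
  have hβp : (0:ℝ) < 1 + β := by linarith
  have hw1 : 1 ≤ w := by
    have h := norm_sub_norm_le ((1 + β) • u) (β • v)
    rw [norm_smul, norm_smul, hu1, hv, Real.norm_eq_abs, Real.norm_eq_abs,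
      abs_of_pos hβp, abs_of_nonneg hβ0] at h
    rw [hw]; linarith
  have hw0 : (0:ℝ) < w := by linarith
  set t : ℝ := ⟪u, v⟫ with ht
  have hwsq : w ^ 2 = (1 + β) ^ 2 - 2 * β * (1 + β) * t + β ^ 2 := by
    rw [hw, norm_sub_sq_real, norm_smul, norm_smul, hu1, hv,
      real_inner_smul_left, real_inner_smul_right, Real.norm_eq_abs, Real.norm_eq_abs,
      abs_of_pos hβp, abs_of_nonneg hβ0]
    ring
  have hinner : ⟪g, v - vh⟫ = -y * t + y * w⁻¹ * ((1 + β) - β * t) := by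
    rw [hg', hvh, inner_sub_right, inner_neg_left, inner_neg_left,
      real_inner_smul_left, real_inner_smul_left, real_inner_smul_right,
      inner_sub_right, real_inner_smul_right, real_inner_smul_right,
      real_inner_self_eq_norm_sq, hu1]
    ring
  have hnsq : ‖v - vh‖ ^ 2 = 1 - 2 * (w⁻¹ * ((1 + β) * t - β)) + w⁻¹ ^ 2 * w ^ 2 := by
    rw [norm_sub_sq_real, hv, hvh, real_inner_smul_right, inner_sub_right,
      real_inner_smul_right, real_inner_smul_right, norm_smul, ← hw,
      real_inner_self_eq_norm_sq, hv,
      Real.norm_eq_abs, abs_inv, abs_of_pos hw0]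
    simp only [ht, real_inner_comm v u]
    ring
  have key : 2 * ⟪g, v - vh⟫ = y * (w - β) / (1 + β) * ‖v - vh‖ ^ 2 := by
    rw [hinner, hnsq]
    have hw0' : w ≠ 0 := hw0.ne'
    field_simp
    linear_combination (-2) * hwsq
  refine ⟨key, ?_, ?_⟩
  · rw [key]
    have hnn : (0:ℝ) ≤ ‖v - vh‖ ^ 2 := by positivity
    have h1 : y * (1 - β) ≤ y * (w - β) := by nlinarith
    have h2 : y * (1 - β) / (1 + β) ≤ y * (w - β) / (1 + β) := by
      exact div_le_div_of_nonneg_right h1 hβp.le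
    exact mul_le_mul_of_nonneg_right h2 hnn
  · exact mul_nonneg (div_nonneg (mul_nonneg hy0.le (by linarith)) hβp.le) (by positivity)
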